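/- Let D, Z > 0 with δ := D/Z satisfying δ ≤ 1/K for a sufficiently large constant K (K ≥ 100 suffices), and D ≥ 2. Let v satisfy Q(v) ≥ Z, d(v) + a(v) ≤ Q(v) + D where a(v) ≤ D. Set γ = 1 − 2√δ, M ≤ Q(v) + D, and L = ⌈Mγ⌉. Then Q(v) − L ≥ Z√δ + D. -/

import Mathlib

/-- Real-arithmetic bound: with `δ = D/Z ≤ 1/K` for `K ≥ 100`, `D ≥ 2`, `Q ≥ Z`,
`M ≤ Q + D`, `γ = 1 - 2√δ` and `L = ⌈Mγ⌉`, one has `Q - L ≥ Z√δ + D`. -/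
theorem stmt_9 (K D Z Q M : ℝ) (hK : 100 ≤ K) (hD : 2 ≤ D) (hZ : 0 < Z)
    (hdelta : D / Z ≤ 1 / K) (hQ : Z ≤ Q) (hM : M ≤ Q + D) :
    Z * Real.sqrt (D / Z) + D ≤
      Q - ((⌈M * (1 - 2 * Real.sqrt (D / Z))⌉ : ℤ) : ℝ) := by
  set s := Real.sqrt (D / Z) with hs_def
  have hD0 : (0:ℝ) < D := by linarith
  have hdZ : (0:ℝ) ≤ D / Z := le_of_lt (div_pos hD0 hZ)
  have hs0 : 0 ≤ s := Real.sqrt_nonneg _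
  have hsq : s ^ 2 = D / Z := Real.sq_sqrt hdZ
  have h100 : D / Z ≤ 1 / 100 := le_trans hdelta (by
    apply one_div_le_one_div_of_le <;> linarith)
  have hZ100 : 100 * D ≤ Z := by
    rw [div_le_div_iff₀ hZ (by norm_num : (0:ℝ) < 100)] at h100
    linarith
  have hs10 : s ≤ 1 / 10 := by nlinarith [hsq, hs0, h100]
  have hZs : 10 * D ≤ Z * s := by
    have h1 : (Z * s) ^ 2 = Z * D := by
      rw [mul_pow, hsq]; field_simp
    nlinarith [mul_nonneg hZ.le hs0, sq_nonneg (Z * s - 10 * D)]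
  have hceil : ((⌈M * (1 - 2 * s)⌉ : ℤ) : ℝ) < M * (1 - 2 * s) + 1 :=
    Int.ceil_lt_add_one _
  have hgam : 0 ≤ 1 - 2 * s := by linarith
  have hMle : M * (1 - 2 * s) ≤ (Q + D) * (1 - 2 * s) :=
    mul_le_mul_of_nonneg_right hM hgam
  have hQs : Z * s ≤ Q * s := mul_le_mul_of_nonneg_right hQ hs0
  have hDs : 0 ≤ D * s := mul_nonneg hD0.le hs0
  nlinarith [hceil, hMle, hQs, hDs, hZs]
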